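/- Let f_0(t) = |t|^{-1/p} for 1 < p < ∞. Then the uncentered maximal function of f_0 at the point 1 equals (p/(p-1)) · (γ^{1/p'} + 1)/(γ + 1), where γ is the unique positive solution of (p/(p-1)) · (γ^{1/p'} + 1)/(γ + 1) = γ^{-1/p}, and p' = p/(p-1). -/

import Mathlib

open MeasureTheory Set
open scoped ENNReal

/-- The uncentered Hardy-Littlewood maximal function over intervals. -/
noncomputable def M (f : ℝ → ℝ) (x : ℝ) : ℝ≥0∞ :=
  ⨆ (a : ℝ) (b : ℝ) (_ : a ≤ x) (_ : x ≤ b) (_ : a < b),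
    ENNReal.ofReal ((b - a)⁻¹ * ∫ t in a..b, f t)

section Aux

variable {r : ℝ}

/-- Integrability of `|t| ^ r` for `-1 < r` on `0..c`. -/
lemma absInt0 (hr : -1 < r) (c : ℝ) :
    IntervalIntegrable (fun t : ℝ => |t| ^ r) volume 0 c := by
  rcases le_or_gt 0 c with hc | hc
  · refine (intervalIntegral.intervalIntegrable_rpow' hr (a := 0) (b := c)).congr_ae ?_
    refine Filter.Eventually.mono (ae_restrict_mem measurableSet_uIoc) ?_
    intro t ht
    rw [uIoc_of_le hc] at ht
    show t ^ r = |t| ^ r; rw [abs_of_pos ht.1]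
  · have h1 : IntervalIntegrable (fun t : ℝ => |t| ^ r) volume 0 (-c) := by
      refine (intervalIntegral.intervalIntegrable_rpow' hr (a := 0) (b := -c)).congr_ae ?_
      refine Filter.Eventually.mono (ae_restrict_mem measurableSet_uIoc) ?_
      intro t ht
      rw [uIoc_of_le (by linarith)] at ht
      show t ^ r = |t| ^ r; rw [abs_of_pos ht.1]
    have h2 := (IntervalIntegrable.iff_comp_neg).mp h1
    simp only [neg_zero, neg_neg] at h2
    simpa only [abs_neg] using h2

lemma absInt (hr : -1 < r) (a b : ℝ) :
    IntervalIntegrable (fun t : ℝ => |t| ^ r) volume a b :=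
  (absInt0 hr a).symm.trans (absInt0 hr b)

/-- `∫_0^x |t|^r = x^(r+1)/(r+1)` for `x ≥ 0`. -/
lemma absIntegral_pos (hr : -1 < r) (hrne : r ≠ 0) {x : ℝ} (hx : 0 ≤ x) :
    ∫ t in (0:ℝ)..x, |t| ^ r = x ^ (r + 1) / (r + 1) := by
  rw [intervalIntegral.integral_congr (g := fun t : ℝ => t ^ r)
      (fun t ht => by rw [uIcc_of_le hx] at ht; rw [abs_of_nonneg ht.1]),
    integral_rpow (Or.inl hr), Real.zero_rpow (by linarith), sub_zero]

/-- `∫_{-x}^0 |t|^r = x^(r+1)/(r+1)` for `x ≥ 0`. -/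
lemma absIntegral_neg (hr : -1 < r) (hrne : r ≠ 0) {x : ℝ} (hx : 0 ≤ x) :
    ∫ t in (-x)..0, |t| ^ r = x ^ (r + 1) / (r + 1) := by
  have h : (fun t : ℝ => |t| ^ r) = fun t : ℝ => |(-t)| ^ r := by
    ext t; rw [abs_neg]
  rw [h, intervalIntegral.integral_comp_neg (fun t : ℝ => |t| ^ r), neg_zero, neg_neg,
    absIntegral_pos hr hrne hx]

end Aux

section Main

variable {r γ : ℝ}

/-- The key upper bound: if `γ` solves the equation, the average over any interval
`[a,b]` with `a ≤ 1 ≤ b` is at most `V = γ ^ r`. -/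
lemma key_ineq (hr1 : -1 < r) (hr0 : r < 0) (hγ : 0 < γ) (hγ1 : γ < 1)
    (hkey : ∫ t in (-γ)..1, |t| ^ r = γ ^ r * (1 + γ))
    {a b : ℝ} (ha : a ≤ 1) (hb : 1 ≤ b) :
    ∫ t in a..b, |t| ^ r ≤ γ ^ r * (b - a) := by
  set V := γ ^ r with hV
  have hV1 : 1 < V := Real.one_lt_rpow_of_pos_of_lt_one_of_neg hγ hγ1 hr0
  have hmono : ∀ t : ℝ, γ ≤ |t| → |t| ^ r ≤ V :=
    fun t ht => Real.rpow_le_rpow_of_nonpos hγ ht hr0.le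
  -- a.e. lower bound on [-γ, γ]
  have hne : ∀ᵐ t : ℝ ∂volume, t ≠ 0 := by
    rw [MeasureTheory.ae_iff]
    have : {t : ℝ | ¬ t ≠ 0} = {0} := by ext t; simp
    rw [this]; exact Real.volume_singleton
  -- Part 2 : ∫_1^b ≤ V (b-1)
  have part2 : ∫ t in (1:ℝ)..b, |t| ^ r ≤ V * (b - 1) := by
    have h := intervalIntegral.integral_mono_on hb (absInt hr1 1 b)
      (intervalIntegrable_const (c := V))
      (fun t ht => hmono t (by rw [abs_of_pos (by linarith [ht.1] : (0:ℝ) < t)]; linarith [ht.1]))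
    simpa [smul_eq_mul, mul_comm] using h
  -- Part 1 : ∫_a^1 ≤ V (1-a)
  have part1 : ∫ t in a..1, |t| ^ r ≤ V * (1 - a) := by
    rcases le_or_gt a (-γ) with hag | hag
    · -- a ≤ -γ
      have hsplit : (∫ t in a..(-γ), |t| ^ r) + ∫ t in (-γ)..1, |t| ^ r
          = ∫ t in a..1, |t| ^ r :=
        intervalIntegral.integral_add_adjacent_intervals (absInt hr1 _ _) (absInt hr1 _ _)
      have h1 : ∫ t in a..(-γ), |t| ^ r ≤ V * (-γ - a) := by
        have h := intervalIntegral.integral_mono_on hag (absInt hr1 _ _)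
          (intervalIntegrable_const (c := V))
          (fun t ht => hmono t (by rw [abs_of_neg (by linarith [ht.2] : t < 0)]; linarith [ht.2]))
        simpa [smul_eq_mul, mul_comm] using h
      nlinarith [hsplit, hkey]
    · -- -γ ≤ a : show ∫_{-γ}^a ≥ V (a + γ)
      have hsplit : (∫ t in (-γ)..a, |t| ^ r) + ∫ t in a..1, |t| ^ r
          = ∫ t in (-γ)..1, |t| ^ r :=
        intervalIntegral.integral_add_adjacent_intervals (absInt hr1 _ _) (absInt hr1 _ _)
      have hlow : V * (a + γ) ≤ ∫ t in (-γ)..a, |t| ^ r := by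
        rcases le_or_gt a γ with haγ | haγ
        · -- pointwise a.e. : V ≤ |t|^r on [-γ, a]
          have h := intervalIntegral.integral_mono_ae_restrict (hag.le)
            (intervalIntegrable_const (c := V)) (absInt hr1 _ _) ?_
          · simpa [smul_eq_mul, mul_comm, add_comm] using h
          · filter_upwards [ae_restrict_mem measurableSet_Icc, ae_restrict_of_ae hne]
              with t ht ht0
            have habs : 0 < |t| := abs_pos.mpr ht0
            have : |t| ≤ γ := abs_le.mpr ⟨ht.1, le_trans ht.2 haγ⟩
            exact Real.rpow_le_rpow_of_nonpos habs this hr0.le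
        · -- γ < a ≤ 1
          have hsplit2 : (∫ t in (-γ)..a, |t| ^ r) + ∫ t in a..1, |t| ^ r
              = ∫ t in (-γ)..1, |t| ^ r := hsplit
          have hup : ∫ t in a..1, |t| ^ r ≤ V * (1 - a) := by
            have h := intervalIntegral.integral_mono_on ha (absInt hr1 _ _)
              (intervalIntegrable_const (c := V))
              (fun t ht => hmono t
                (by rw [abs_of_pos (by linarith [ht.1] : (0:ℝ) < t)]; linarith [ht.1]))
            simpa [smul_eq_mul, mul_comm] using h
          nlinarith [hkey]
      nlinarith [hkey]
  have hsplit : (∫ t in a..(1:ℝ), |t| ^ r) + ∫ t in (1:ℝ)..b, |t| ^ r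
      = ∫ t in a..b, |t| ^ r :=
    intervalIntegral.integral_add_adjacent_intervals (absInt hr1 _ _) (absInt hr1 _ _)
  nlinarith

end Main


/-- For `f₀(t) = |t|^(-1/p)`, the value of the uncentered maximal function at
`1` equals `(p/(p-1))·(γ^(1/p') + 1)/(γ + 1)` where `γ > 0` solves
`(p/(p-1))·(γ^(1/p') + 1)/(γ + 1) = γ^(-1/p)` and `1/p' = (p-1)/p`. -/
theorem maximal_of_power_at_one (p γ : ℝ) (hp : 1 < p) (hγ : 0 < γ)
    (hγeq : p / (p - 1) * ((γ ^ ((p - 1) / p) + 1) / (γ + 1)) = γ ^ (-(1 / p))) :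
    M (fun t => |t| ^ (-(1 / p))) 1
      = ENNReal.ofReal (p / (p - 1) * ((γ ^ ((p - 1) / p) + 1) / (γ + 1))) := by
  have hp0 : 0 < p := by linarith
  set r : ℝ := -(1 / p) with hrdef
  have hr0 : r < 0 := by rw [hrdef]; simp; positivity
  have hr1 : -1 < r := by
    rw [hrdef, neg_lt_neg_iff]
    rw [div_lt_one hp0]; linarith
  have hq : (p - 1) / p = r + 1 := by rw [hrdef]; field_simp; ring
  have hc : p / (p - 1) = (r + 1)⁻¹ := by
    rw [← hq, inv_div]
  have hr1pos : 0 < r + 1 := by linarith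
  have hγ1pos : (0:ℝ) < γ + 1 := by linarith
  -- rewrite the equation
  rw [hq, hc] at hγeq
  have hVpos : 0 < γ ^ r := Real.rpow_pos_of_pos hγ r
  have hqpos : 0 < γ ^ (r + 1) := Real.rpow_pos_of_pos hγ _
  have hrpow : γ ^ (r + 1) = γ ^ r * γ := Real.rpow_add_one hγ.ne' r
  -- γ < 1
  have hγ1 : γ < 1 := by
    by_contra h
    push_neg at h
    have hVle : γ ^ r ≤ 1 := Real.rpow_le_one_of_one_le_of_nonpos h hr0.le
    have hinv : 1 < (r + 1)⁻¹ := (one_lt_inv₀ hr1pos).mpr (by linarith)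
    have heq : (γ ^ (r + 1) + 1) * (r + 1)⁻¹ = γ ^ (r + 1) + γ ^ r := by
      field_simp at hγeq ⊢
      nlinarith [hγeq, hrpow]
    nlinarith
  -- the key integral identity
  have hkey : ∫ t in (-γ)..1, |t| ^ r = γ ^ r * (1 + γ) := by
    have hsplit : (∫ t in (-γ)..(0:ℝ), |t| ^ r) + ∫ t in (0:ℝ)..1, |t| ^ r
        = ∫ t in (-γ)..1, |t| ^ r :=
      intervalIntegral.integral_add_adjacent_intervals (absInt hr1 _ _) (absInt hr1 _ _)
    rw [← hsplit, absIntegral_neg hr1 hr0.ne hγ.le,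
      absIntegral_pos hr1 hr0.ne (by norm_num : (0:ℝ) ≤ 1), Real.one_rpow]
    have := hγeq
    field_simp at this ⊢
    nlinarith [this]
  -- value V
  set V : ℝ := γ ^ r with hVdef
  -- the maximal function equals ofReal V
  have hgoal : ENNReal.ofReal ((r + 1)⁻¹ * ((γ ^ (r + 1) + 1) / (γ + 1)))
      = ENNReal.ofReal V := by rw [hγeq]
  rw [hq, hc, hgoal]
  unfold M
  apply le_antisymm
  · -- upper bound
    refine iSup_le fun a => iSup_le fun b => iSup_le fun ha => iSup_le fun hb =>
      iSup_le fun hab => ?_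
    apply ENNReal.ofReal_le_ofReal
    rw [inv_mul_le_iff₀ (by linarith : (0:ℝ) < b - a)]
    calc ∫ t in a..b, |t| ^ r ≤ V * (b - a) := key_ineq hr1 hr0 hγ hγ1 hkey ha hb
    _ = (b - a) * V := mul_comm _ _
  · -- lower bound : take a = -γ, b = 1
    have hval : (1 - (-γ))⁻¹ * ∫ t in (-γ)..1, |t| ^ r = V := by
      rw [hkey]; field_simp
      rw [sub_neg_eq_add, div_self (by linarith)]
    apply le_iSup_of_le (-γ)
    apply le_iSup_of_le 1
    apply le_iSup_of_le (by linarith : -γ ≤ (1:ℝ))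
    apply le_iSup_of_le (le_refl (1:ℝ))
    apply le_iSup_of_le (by linarith : -γ < (1:ℝ))
    exact le_of_eq (by rw [hval])
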